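/- Let G be a graph with n vertices, m edges, and maximum degree Δ(G), and let k ≤ m. There exists a subgraph G' of G with exactly k edges and maximum degree Δ(G') ≤ (2k + 4n)·Δ(G)/m. -/

import Mathlib

open Finset

private lemma sym2_filter_card {V : Type*} [Fintype V] [DecidableEq V]
    (e : Sym2 V) (he : ¬ e.IsDiag) :
    #(univ.filter (fun v : V => v ∈ e)) = 2 := by
  induction e with
  | _ a b =>
    have hab : a ≠ b := by simpa using he
    have : univ.filter (fun v : V => v ∈ s(a, b)) = {a, b} := by
      ext v; simp [Sym2.mem_iff]
    rw [this, Finset.card_pair hab]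

private lemma sum_degS {V : Type*} [Fintype V] [DecidableEq V]
    (G : SimpleGraph V) [DecidableRel G.Adj] (S : Finset (Sym2 V))
    (hS : S ⊆ G.edgeFinset) :
    ∑ v : V, #(S.filter (fun e => v ∈ e)) = 2 * #S := by
  have h1 : ∀ v : V, #(S.filter (fun e => v ∈ e)) = ∑ e ∈ S, if v ∈ e then 1 else 0 := by
    intro v; rw [Finset.card_filter]
  simp_rw [h1]
  rw [Finset.sum_comm]
  have h2 : ∀ e ∈ S, (∑ v : V, if v ∈ e then 1 else 0) = 2 := by
    intro e he
    have hd : ¬ e.IsDiag :=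
      G.not_isDiag_of_mem_edgeSet (by simpa [SimpleGraph.mem_edgeFinset] using hS he)
    rw [← Finset.card_filter]
    exact sym2_filter_card e hd
  rw [Finset.sum_congr rfl h2, Finset.sum_const, smul_eq_mul, mul_comm]

private lemma degS_le_degree {V : Type*} [Fintype V] [DecidableEq V]
    (G : SimpleGraph V) [DecidableRel G.Adj] (S : Finset (Sym2 V))
    (hS : S ⊆ G.edgeFinset) (v : V) :
    #(S.filter (fun e => v ∈ e)) ≤ G.degree v := by
  rw [← SimpleGraph.card_incidenceFinset_eq_degree, SimpleGraph.incidenceFinset_eq_filter]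
  exact Finset.card_le_card (Finset.filter_subset_filter _ hS)

private lemma exists_good_subset {V : Type*} [Fintype V] [DecidableEq V]
    (G : SimpleGraph V) [DecidableRel G.Adj] (m t : ℕ)
    (hm : #G.edgeFinset = m) :
    ∀ k : ℕ, k ≤ m → (∀ j, j < k → 2 * j * G.maxDegree < m * t) →
    ∃ S : Finset (Sym2 V), S ⊆ G.edgeFinset ∧ #S = k ∧
      ∀ v, #(S.filter (fun e => v ∈ e)) ≤ t := by
  intro k
  induction k with
  | zero => intro _ _; exact ⟨∅, by simp⟩
  | succ k ih =>
    intro hk hlt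
    obtain ⟨S, hSsub, hScard, hSdeg⟩ :=
      ih (le_of_lt hk) (fun j hj => hlt j (Nat.lt_succ_of_lt hj))
    set Δ := G.maxDegree with hΔdef
    set degS := fun v => #(S.filter (fun e => v ∈ e)) with hdegS
    set B : Finset V := univ.filter (fun v => t ≤ degS v) with hB
    set Bad : Finset (Sym2 V) :=
      (G.edgeFinset \ S).filter (fun e => ∃ v, v ∈ e ∧ t ≤ degS v) with hBad
    have hrest : #(G.edgeFinset \ S) = m - k := by
      rw [Finset.card_sdiff_of_subset hSsub, hm, hScard]
    -- Bad ⊆ biUnion over B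
    have hBadsub : Bad ⊆ B.biUnion (fun v => (G.edgeFinset \ S).filter (fun e => v ∈ e)) := by
      intro e he
      rw [hBad, Finset.mem_filter] at he
      obtain ⟨v, hv1, hv2⟩ := he.2
      refine Finset.mem_biUnion.2 ⟨v, ?_, ?_⟩
      · rw [hB, Finset.mem_filter]; exact ⟨Finset.mem_univ _, hv2⟩
      · rw [Finset.mem_filter]; exact ⟨he.1, hv1⟩
    have hcardeach : ∀ v ∈ B, #((G.edgeFinset \ S).filter (fun e => v ∈ e)) ≤ Δ - t := by
      intro v hv
      rw [hB, Finset.mem_filter] at hv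
      have hveq : #(S.filter (fun e => v ∈ e)) = t := le_antisymm (hSdeg v) hv.2
      have hsplit : (G.edgeFinset \ S).filter (fun e => v ∈ e)
          = G.edgeFinset.filter (fun e => v ∈ e) \ S.filter (fun e => v ∈ e) := by
        ext e; simp only [Finset.mem_filter, Finset.mem_sdiff]; tauto
      rw [hsplit, Finset.card_sdiff_of_subset (Finset.filter_subset_filter _ hSsub)]
      have hdeg : #(G.edgeFinset.filter (fun e => v ∈ e)) = G.degree v := by
        rw [← SimpleGraph.card_incidenceFinset_eq_degree, SimpleGraph.incidenceFinset_eq_filter]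
      rw [hdeg, hveq]
      exact Nat.sub_le_sub_right (G.degree_le_maxDegree v) t
    have hBadcard : #Bad ≤ #B * (Δ - t) := by
      calc #Bad ≤ ∑ v ∈ B, #((G.edgeFinset \ S).filter (fun e => v ∈ e)) :=
            le_trans (Finset.card_le_card hBadsub) (Finset.card_biUnion_le)
        _ ≤ ∑ _v ∈ B, (Δ - t) := Finset.sum_le_sum hcardeach
        _ = #B * (Δ - t) := by rw [Finset.sum_const, smul_eq_mul]
    have hBt : #B * t ≤ 2 * k := by
      calc #B * t = ∑ _v ∈ B, t := by rw [Finset.sum_const, smul_eq_mul]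
        _ ≤ ∑ v ∈ B, degS v := by
            refine Finset.sum_le_sum ?_
            intro v hv; rw [hB, Finset.mem_filter] at hv; exact hv.2
        _ ≤ ∑ v : V, degS v := Finset.sum_le_sum_of_subset (Finset.subset_univ B)
        _ = 2 * #S := sum_degS G S hSsub
        _ = 2 * k := by rw [hScard]
    have hltk : 2 * k * Δ < m * t := hlt k (Nat.lt_succ_self k)
    -- Bad.card < m - k
    have hBadlt : #Bad < m - k := by
      by_contra hcon
      push_neg at hcon
      have h1 : m - k ≤ #B * (Δ - t) := le_trans hcon hBadcard
      have hkm : k + 1 ≤ m := hk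
      rcases le_or_gt t Δ with hcase | hcase
      · obtain ⟨d, hd⟩ := Nat.exists_eq_add_of_le hcase
        rw [hd] at h1 hltk
        rw [Nat.add_sub_cancel_left] at h1
        have h2 : m ≤ k + #B * d := by omega
        have h3 : m * t ≤ (k + #B * d) * t := Nat.mul_le_mul_right t h2
        have h4 : #B * d * t ≤ 2 * k * d := by
          calc #B * d * t = (#B * t) * d := by ring
            _ ≤ (2 * k) * d := Nat.mul_le_mul_right d hBt
            _ = 2 * k * d := rfl
        nlinarith [hltk, h3, h4]
      · have hBempty : B = ∅ := by
          rw [hB, Finset.filter_eq_empty_iff]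
          intro v _
          push_neg
          exact lt_of_le_of_lt (le_trans (degS_le_degree G S hSsub v)
            (G.degree_le_maxDegree v)) hcase
        rw [hBempty, Finset.card_empty, Nat.zero_mul] at h1
        omega
    -- find a good edge
    have hBadsub' : Bad ⊆ G.edgeFinset \ S := by
      rw [hBad]; exact Finset.filter_subset _ _
    have hgood : ((G.edgeFinset \ S) \ Bad).Nonempty := by
      rw [← Finset.card_pos, Finset.card_sdiff_of_subset hBadsub', hrest]
      omega
    obtain ⟨e, he⟩ := hgood
    rw [Finset.mem_sdiff] at he
    have heE : e ∈ G.edgeFinset \ S := he.1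
    have heBad : ∀ v, v ∈ e → degS v < t := by
      intro v hv
      by_contra hcon
      push_neg at hcon
      exact he.2 (by rw [hBad, Finset.mem_filter]; exact ⟨he.1, v, hv, hcon⟩)
    rw [Finset.mem_sdiff] at heE
    refine ⟨insert e S, ?_, ?_, ?_⟩
    · exact Finset.insert_subset heE.1 hSsub
    · rw [Finset.card_insert_of_notMem heE.2, hScard]
    · intro v
      rw [Finset.filter_insert]
      split_ifs with hve
      · rw [Finset.card_insert_of_notMem (fun h => heE.2 (Finset.mem_of_mem_filter _ h))]
        exact heBad v hve
      · exact hSdeg v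

theorem sparsify_exists {V : Type*} [Fintype V] [DecidableEq V]
    (G : SimpleGraph V) [DecidableRel G.Adj] (n m : ℕ)
    (hn : Fintype.card V = n) (hm : G.edgeFinset.card = m)
    (k : ℕ) (hk : k ≤ m) :
    ∃ G' : SimpleGraph V, G' ≤ G ∧ G'.edgeSet.ncard = k ∧
      ∀ v : V, ((G'.neighborSet v).ncard : ℝ) ≤
        (2 * k + 4 * n) * G.maxDegree / m := by
  rcases Nat.eq_zero_or_pos m with hm0 | hmpos
  · -- m = 0, k = 0
    have hk0 : k = 0 := by omega
    refine ⟨⊥, bot_le, by simp [hk0], ?_⟩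
    intro v
    have h0 : ((⊥ : SimpleGraph V).neighborSet v) = ∅ := by ext w; simp
    rw [h0, hm0]
    simp
  · set Δ := G.maxDegree with hΔdef
    -- n * Δ ≥ 2 * m
    have hsum : ∑ v : V, G.degree v = 2 * m := by
      rw [G.sum_degrees_eq_twice_card_edges, hm]
    have hnΔ : 2 * m ≤ n * Δ := by
      rw [← hsum]
      calc ∑ v : V, G.degree v ≤ ∑ _v : V, Δ :=
            Finset.sum_le_sum (fun v _ => G.degree_le_maxDegree v)
        _ = n * Δ := by rw [Finset.sum_const, smul_eq_mul, Finset.card_univ, hn]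
    have hΔpos : 1 ≤ Δ := by
      rcases Nat.eq_zero_or_pos Δ with h | h
      · rw [h] at hnΔ; omega
      · exact h
    set t := 2 * k * Δ / m + 1 with htdef
    have hmt : 2 * k * Δ < m * t := by
      have hdm := Nat.div_add_mod (2 * k * Δ) m
      have hmod : (2 * k * Δ) % m < m := Nat.mod_lt _ hmpos
      calc 2 * k * Δ < m * (2 * k * Δ / m) + m := by omega
        _ = m * t := by rw [htdef]; ring
    obtain ⟨S, hSsub, hScard, hSdeg⟩ := exists_good_subset G m t hm k hk
      (fun j hj => lt_of_le_of_lt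
        (Nat.mul_le_mul_right Δ (by omega : 2 * j ≤ 2 * k)) hmt)
    refine ⟨SimpleGraph.fromEdgeSet ↑S, ?_, ?_, ?_⟩
    · intro v w h
      rw [SimpleGraph.fromEdgeSet_adj] at h
      have := hSsub h.1
      rwa [SimpleGraph.mem_edgeFinset, SimpleGraph.mem_edgeSet] at this
    · rw [SimpleGraph.edgeSet_fromEdgeSet]
      have : (↑S : Set (Sym2 V)) \ {e : Sym2 V | e.IsDiag} = ↑S := by
        ext e
        simp only [Set.mem_diff, Set.mem_setOf_eq, Finset.mem_coe, and_iff_left_iff_imp]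
        intro he
        exact G.not_isDiag_of_mem_edgeSet
          (by simpa [SimpleGraph.mem_edgeFinset] using hSsub he)
      rw [Sym2.diagSet_eq_setOfPred_isDiag, this, Set.ncard_coe_finset, hScard]
    · intro v
      -- degree in G' ≤ t
      have hinj : Set.InjOn (fun w => s(v, w))
          ((SimpleGraph.fromEdgeSet ↑S).neighborSet v) := by
        intro a _ b _ hab
        rcases Sym2.eq_iff.mp hab with ⟨-, h⟩ | ⟨h1, h2⟩
        · exact h
        · exact h2.trans h1
      have himg : (fun w => s(v, w)) '' ((SimpleGraph.fromEdgeSet ↑S).neighborSet v)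
          ⊆ ↑(S.filter (fun e => v ∈ e)) := by
        rintro _ ⟨w, hw, rfl⟩
        rw [SimpleGraph.mem_neighborSet, SimpleGraph.fromEdgeSet_adj] at hw
        simp only [Finset.coe_filter, Set.mem_setOf_eq]
        exact ⟨hw.1, Sym2.mem_mk_left v w⟩
      have hdegle : ((SimpleGraph.fromEdgeSet ↑S).neighborSet v).ncard ≤ t := by
        calc ((SimpleGraph.fromEdgeSet ↑S).neighborSet v).ncard
            = ((fun w => s(v, w)) '' ((SimpleGraph.fromEdgeSet ↑S).neighborSet v)).ncard :=
              (Set.ncard_image_of_injOn hinj).symm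
          _ ≤ (↑(S.filter (fun e => v ∈ e)) : Set (Sym2 V)).ncard :=
              Set.ncard_le_ncard himg (Finset.finite_toSet _)
          _ = #(S.filter (fun e => v ∈ e)) := Set.ncard_coe_finset _
          _ ≤ t := hSdeg v
      have hcast : ((SimpleGraph.fromEdgeSet (↑S : Set (Sym2 V))).neighborSet v).ncard ≤ (t : ℝ) := by
        exact_mod_cast hdegle
      refine le_trans hcast ?_
      -- t ≤ (2k+4n)Δ/m over ℝ
      have hmR : (0 : ℝ) < m := by exact_mod_cast hmpos
      have h1 : ((2 * k * Δ / m : ℕ) : ℝ) ≤ (2 * k * Δ : ℕ) / (m : ℝ) :=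
        Nat.cast_div_le
      have h2 : (1 : ℝ) ≤ (4 * n * Δ : ℕ) / (m : ℝ) := by
        rw [le_div_iff₀ hmR]
        have hring : 4 * n * Δ = 4 * (n * Δ) := by ring
        have hle : m ≤ 4 * n * Δ := by omega
        have : (m : ℝ) ≤ ((4 * n * Δ : ℕ) : ℝ) := by exact_mod_cast hle
        linarith
      have : (t : ℝ) ≤ (2 * k * Δ : ℕ) / (m : ℝ) + (4 * n * Δ : ℕ) / (m : ℝ) := by
        rw [htdef]
        push_cast at h1 h2 ⊢
        linarith
      refine le_trans this (le_of_eq ?_)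
      push_cast
      ring
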